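/- For every k ≥ 1, the map (x₁,…,x_k) ↦ (x₁, (x₂·x₁⁻¹, …, x_k·x₁⁻¹)) is a homeomorphism from F̃_k(L_{7,1}) onto S³ × Y_{k−1}, where Y_{k−1} is the orbit configuration space of k−1 points in the ℤ/7-space S³ ∖ μ₇, i.e., the subspace of (S³ ∖ μ₇)^{k−1} of tuples (y₂,…,y_k) with y_i ≠ ζᵐ·y_j for all i ≠ j and all m ∈ {0,…,6}. -/

import Mathlib

open Quaternion

/-- The group of unit quaternions (`S³`). -/
abbrev UQ := Metric.sphere (0 : Quaternion ℝ) 1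

/-- The 7th root of unity `exp(2πik/7) ∈ ℂ ⊆ ℍ`, as a quaternion. -/
noncomputable def zqQ (k : Fin 7) : Quaternion ℝ :=
  ⟨Real.cos (2 * Real.pi * k / 7), Real.sin (2 * Real.pi * k / 7), 0, 0⟩

lemma norm_zqQ (k : Fin 7) : ‖zqQ k‖ = 1 := by
  have h : ‖zqQ k‖ ^ 2 = 1 := by
    rw [sq, ← Quaternion.normSq_eq_norm_mul_self, Quaternion.normSq_def']
    simp [zqQ, Real.cos_sq_add_sin_sq]
  have h0 : (0:ℝ) ≤ ‖zqQ k‖ := norm_nonneg _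
  nlinarith [h, h0]

/-- The 7th root of unity `exp(2πik/7)` as a unit quaternion; `ℤ/7` acts on `S³` by
left multiplication by these elements (the covering action of `L_{7,1}`). -/
noncomputable def zq (k : Fin 7) : UQ :=
  ⟨zqQ k, by rw [mem_sphere_zero_iff_norm]; exact norm_zqQ k⟩

/-- The complement `S³ ∖ μ₇` of the 7th roots of unity in the unit quaternions. -/
abbrev SminusMu := {q : UQ // ∀ k : Fin 7, q ≠ zq k}

/-- The orbit configuration space `F̃_k(L_{7,1})`: `k`-tuples of unit quaternions lying
in pairwise distinct `ℤ/7`-orbits. -/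
abbrev OrbQ (k : ℕ) :=
  {f : Fin k → UQ // ∀ i j, i ≠ j → ∀ m : Fin 7, f i ≠ zq m * f j}

/-- The orbit configuration space `Y_k` of `k` points in the `ℤ/7`-space `S³ ∖ μ₇`:
tuples `(y_1,…,y_k)` in `S³ ∖ μ₇` with `y_i ≠ ζᵐ·y_j` for all `i ≠ j` and all `m`. -/
abbrev Y (k : ℕ) :=
  {f : Fin k → SminusMu // ∀ i j, i ≠ j → ∀ m : Fin 7, (f i : UQ) ≠ zq m * (f j : UQ)}

/-- The map `(x₁,…,x_k) ↦ (x₁, (x₂·x₁⁻¹, …, x_k·x₁⁻¹))`. -/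
noncomputable def psi (m : ℕ) : OrbQ (m + 1) → UQ × Y m := fun x =>
  (x.1 0,
    ⟨fun j => ⟨x.1 j.succ * (x.1 0)⁻¹,
        fun k h => x.2 j.succ 0 (Fin.succ_ne_zero j) k (mul_inv_eq_iff_eq_mul.mp h)⟩,
      by
        intro i j hij k h
        apply x.2 i.succ j.succ (fun e => hij (Fin.succ_injective _ e)) k
        have h' : x.1 i.succ * (x.1 0)⁻¹ = (zq k * x.1 j.succ) * (x.1 0)⁻¹ := by
          rw [mul_assoc]; exact h
        exact mul_right_cancel h'⟩)

lemma zqQ_mul (a b : Fin 7) : zqQ a * zqQ b = zqQ (a + b) := by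
  set q : ℕ := ((a : ℕ) + (b : ℕ)) / 7 with hq
  have h2 : (a : ℕ) + (b : ℕ) = 7 * q + ((a + b : Fin 7) : ℕ) := by
    have hv : ((a + b : Fin 7) : ℕ) = ((a : ℕ) + (b : ℕ)) % 7 := by
      simp [Fin.add_def]
    omega
  have h3 : ((a : ℕ) : ℝ) + ((b : ℕ) : ℝ) = 7 * (q : ℝ) + (((a + b : Fin 7) : ℕ) : ℝ) := by
    exact_mod_cast congrArg (Nat.cast : ℕ → ℝ) h2
  have key : 2 * Real.pi * (((a + b : Fin 7) : ℕ) : ℝ) / 7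
      = (2 * Real.pi * ((a : ℕ) : ℝ) / 7 + 2 * Real.pi * ((b : ℕ) : ℝ) / 7)
        + ((-(q : ℤ) : ℤ) : ℝ) * (2 * Real.pi) := by
    push_cast
    linarith [mul_comm Real.pi ((q:ℝ)), congrArg (fun t : ℝ => 2 * Real.pi * t / 7) h3]
  have hc : Real.cos (2 * Real.pi * (((a + b : Fin 7) : ℕ) : ℝ) / 7)
      = Real.cos (2 * Real.pi * ((a:ℕ):ℝ) / 7) * Real.cos (2 * Real.pi * ((b:ℕ):ℝ) / 7)
        - Real.sin (2 * Real.pi * ((a:ℕ):ℝ) / 7) * Real.sin (2 * Real.pi * ((b:ℕ):ℝ) / 7) := by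
    rw [key, Real.cos_add_int_mul_two_pi, Real.cos_add]
  have hs : Real.sin (2 * Real.pi * (((a + b : Fin 7) : ℕ) : ℝ) / 7)
      = Real.sin (2 * Real.pi * ((a:ℕ):ℝ) / 7) * Real.cos (2 * Real.pi * ((b:ℕ):ℝ) / 7)
        + Real.cos (2 * Real.pi * ((a:ℕ):ℝ) / 7) * Real.sin (2 * Real.pi * ((b:ℕ):ℝ) / 7) := by
    rw [key, Real.sin_add_int_mul_two_pi, Real.sin_add]
  ext <;>
    simp only [Quaternion.re_mul, Quaternion.imI_mul, Quaternion.imJ_mul,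
      Quaternion.imK_mul] <;> simp only [zqQ, hc, hs] <;> ring

lemma zq_mul (a b : Fin 7) : zq a * zq b = zq (a + b) :=
  Subtype.ext (by rw [Metric.unitSphere.coe_mul]; exact zqQ_mul a b)

lemma zq_zero : zq 0 = 1 :=
  Subtype.ext (by rw [Metric.unitSphere.coe_one]; ext <;> simp [zq, zqQ])

lemma zq_inv (a : Fin 7) : (zq a)⁻¹ = zq (-a) := by
  rw [eq_comm, eq_inv_iff_mul_eq_one, zq_mul]
  simp [zq_zero]

/-- The inverse map `(a, (y₂,…,y_k)) ↦ (a, y₂·a, …, y_k·a)`. -/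
noncomputable def phi (m : ℕ) : UQ × Y m → OrbQ (m + 1) := fun p =>
  ⟨fun i => Fin.cases p.1 (fun j => (p.2.1 j : UQ) * p.1) i, by
    intro i j hij k h
    induction i using Fin.cases with
    | zero =>
      induction j using Fin.cases with
      | zero => exact hij rfl
      | succ j =>
        simp only [Fin.cases_zero, Fin.cases_succ] at h
        have h1 : (1 : UQ) * p.1 = (zq k * (p.2.1 j : UQ)) * p.1 := by
          rw [one_mul, mul_assoc]; exact h
        have h2 : (1 : UQ) = zq k * (p.2.1 j : UQ) := mul_right_cancel h1
        have h3 : (p.2.1 j : UQ) = (zq k)⁻¹ := eq_inv_of_mul_eq_one_right h2.symm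
        exact (p.2.1 j).2 (-k) (by rw [h3, zq_inv])
    | succ i =>
      induction j using Fin.cases with
      | zero =>
        simp only [Fin.cases_zero, Fin.cases_succ] at h
        exact (p.2.1 i).2 k (mul_right_cancel (h.trans rfl))
      | succ j =>
        simp only [Fin.cases_succ] at h
        apply p.2.2 i j (fun e => hij (by rw [e])) k
        have h' : (p.2.1 i : UQ) * p.1 = (zq k * (p.2.1 j : UQ)) * p.1 := by
          rw [mul_assoc]; exact h
        exact mul_right_cancel h'⟩

noncomputable def psiHomeo (m : ℕ) : OrbQ (m + 1) ≃ₜ UQ × Y m where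
  toFun := psi m
  invFun := phi m
  left_inv := by
    intro x
    apply Subtype.ext
    funext i
    induction i using Fin.cases with
    | zero => rfl
    | succ j =>
      show (x.1 j.succ * (x.1 0)⁻¹) * x.1 0 = x.1 j.succ
      exact inv_mul_cancel_right _ _
  right_inv := by
    intro p
    refine Prod.ext rfl ?_
    apply Subtype.ext
    funext j
    apply Subtype.ext
    show ((p.2.1 j : UQ) * p.1) * p.1⁻¹ = (p.2.1 j : UQ)
    exact mul_inv_cancel_right _ _
  continuous_toFun := by
    apply Continuous.prodMk
    · exact (continuous_apply (0 : Fin (m+1))).comp continuous_subtype_val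
    · apply Continuous.subtype_mk
      apply continuous_pi
      intro j
      apply Continuous.subtype_mk
      exact ((continuous_apply j.succ).comp continuous_subtype_val).mul
        (((continuous_apply (0 : Fin (m+1))).comp continuous_subtype_val).inv)
  continuous_invFun := by
    apply Continuous.subtype_mk
    apply continuous_pi
    intro i
    induction i using Fin.cases with
    | zero =>
      simp only [Fin.cases_zero]
      exact continuous_fst
    | succ j =>
      simp only [Fin.cases_succ]
      exact (continuous_subtype_val.comp ((continuous_apply j).comp
        (continuous_subtype_val.comp continuous_snd))).mul continuous_fst

/-- For every `k ≥ 1` (written here as `k = m + 1`), the map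
`(x₁,…,x_k) ↦ (x₁, (x₂·x₁⁻¹, …, x_k·x₁⁻¹))` is a homeomorphism from `F̃_k(L_{7,1})`
onto `S³ × Y_{k−1}`, where `Y_{k−1}` is the orbit configuration space of `k−1` points
in the `ℤ/7`-space `S³ ∖ μ₇`. -/
theorem stmt_18 (m : ℕ) : IsHomeomorph (psi m) := by
  exact (psiHomeo m).isHomeomorph
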